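/- Let X be an infinite second-countable T₁ topological space in which no two distinct points have disjoint open neighborhoods (X contains no T₂ pair). Then X has a countably infinite subset Y whose subspace topology is the cofinite topology: the open subsets of Y in the subspace topology are exactly ∅ and the sets whose complement in Y is finite. -/

import Mathlib

/-- Let `X` be an infinite second-countable T₁ space containing no T₂ pair (no two distinct
points have disjoint open neighborhoods). Then `X` has a countably infinite subset `Y`
whose subspace topology is the cofinite topology: the open subsets of `Y` are exactly `∅`
and the sets whose complement in `Y` is finite. -/
theorem pure_T1_has_cofinite_subspace {X : Type*} [TopologicalSpace X]
    [SecondCountableTopology X] [T1Space X] [Infinite X]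
    (hpure : ¬ ∃ x y : X, x ≠ y ∧ ∃ U V : Set X,
      IsOpen U ∧ IsOpen V ∧ x ∈ U ∧ y ∈ V ∧ U ∩ V = ∅) :
    ∃ Y : Set X, Y.Countable ∧ Y.Infinite ∧
      ∀ V : Set Y, IsOpen V ↔ V = ∅ ∨ Vᶜ.Finite := by
  classical
  obtain ⟨B, hBc, hBne, hB⟩ := TopologicalSpace.exists_countable_basis X
  obtain ⟨x0⟩ : Nonempty X := inferInstance
  have hBnonempty : B.Nonempty := by
    have hx : x0 ∈ ⋃₀ B := by rw [hB.sUnion_eq]; trivial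
    rcases hx with ⟨t, ht, _⟩
    exact ⟨t, ht⟩
  obtain ⟨b, hb⟩ := Set.Countable.exists_eq_range hBc hBnonempty
  have hbmem : ∀ n, b n ∈ B := fun n => hb ▸ Set.mem_range_self n
  have hbopen : ∀ n, IsOpen (b n) := fun n => hB.isOpen (hbmem n)
  have hbne : ∀ n, (b n).Nonempty := by
    intro n
    rcases Set.eq_empty_or_nonempty (b n) with h | h
    · exact absurd (h ▸ hbmem n) hBne
    · exact h
  have hyper : ∀ U V : Set X, IsOpen U → IsOpen V → U.Nonempty → V.Nonempty →
      (U ∩ V).Nonempty := by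
    rintro U V hU hV ⟨x, hx⟩ ⟨y, hy⟩
    by_contra h
    rw [Set.not_nonempty_iff_eq_empty] at h
    have hxy : x ≠ y := by
      rintro rfl
      have : x ∈ U ∩ V := ⟨hx, hy⟩
      rw [h] at this
      exact this
    exact hpure ⟨x, y, hxy, U, V, hU, hV, hx, hy, h⟩
  have hinfU : ∀ U : Set X, IsOpen U → U.Nonempty → U.Infinite := by
    rintro U hU ⟨x, hx⟩
    by_contra hfin
    rw [Set.not_infinite] at hfin
    have hsing : IsOpen ({x} : Set X) := by
      have hxeq : ({x} : Set X) = U \ (U \ {x}) := by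
        ext z
        simp only [Set.mem_singleton_iff, Set.mem_diff, not_and, not_not]
        constructor
        · rintro rfl; exact ⟨hx, fun _ => rfl⟩
        · rintro ⟨hz, h2⟩; exact h2 hz
      rw [hxeq]
      exact hU.sdiff (hfin.diff).isClosed
    obtain ⟨y, hy⟩ := exists_ne x
    have := hyper {x} {x}ᶜ hsing isOpen_compl_singleton ⟨x, rfl⟩ ⟨y, hy⟩
    simp at this
  set W : ℕ → Set X := fun n => ⋂ i ∈ Finset.range (n + 1), b i with hW
  have hWopen : ∀ n, IsOpen (W n) := fun n =>
    isOpen_biInter_finset (fun i _ => hbopen i)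
  have hWsub : ∀ m n, m ≤ n → W n ⊆ b m := by
    intro m n hmn
    apply Set.biInter_subset_of_mem
    exact Finset.mem_range.mpr (Nat.lt_succ_of_le hmn)
  have hWne : ∀ n, (W n).Nonempty := by
    intro n
    induction n with
    | zero => simpa [hW] using hbne 0
    | succ n ih =>
      have heq : W (n + 1) = b (n + 1) ∩ W n := by
        simp only [hW]
        rw [Finset.range_add_one, Finset.set_biInter_insert]
      rw [heq]
      exact hyper _ _ (hbopen _) (hWopen n) (hbne _) ih
  have hWinf : ∀ n, (W n).Infinite := fun n => hinfU _ (hWopen n) (hWne n)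
  have hne : ∀ (n : ℕ) (s : Finset X), (W n \ ↑s).Nonempty :=
    fun n s => ((hWinf n).diff s.finite_toSet).nonempty
  let g : ℕ → Finset X := fun n => Nat.rec ∅ (fun m s => insert (hne m s).choose s) n
  let y : ℕ → X := fun n => (hne n (g n)).choose
  have hy_spec : ∀ n, y n ∈ W n ∧ y n ∉ g n := by
    intro n
    have h := (hne n (g n)).choose_spec
    exact ⟨h.1, fun hc => h.2 (Finset.mem_coe.mpr hc)⟩
  have hg_succ : ∀ n, g (n + 1) = insert (y n) (g n) := fun _ => rfl
  have hmemg : ∀ m n, m < n → y m ∈ g n := by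
    intro m n h
    induction n with
    | zero => omega
    | succ n ih =>
      rw [hg_succ]
      rcases Nat.lt_succ_iff_lt_or_eq.mp h with h' | h'
      · exact Finset.mem_insert_of_mem (ih h')
      · subst h'; exact Finset.mem_insert_self _ _
  have hyinj : Function.Injective y := by
    intro i j hij
    by_contra hne'
    wlog hlt : i < j generalizing i j
    · exact this hij.symm (Ne.symm hne') (by omega)
    have h1 : y i ∈ g j := hmemg i j hlt
    have h2 : y j ∉ g j := (hy_spec j).2
    rw [hij] at h1
    exact h2 h1
  refine ⟨Set.range y, Set.countable_range y, Set.infinite_range_of_injective hyinj, ?_⟩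
  intro V
  constructor
  · intro hV
    rcases Set.eq_empty_or_nonempty V with h | ⟨⟨x, hx⟩, hxV⟩
    · exact Or.inl h
    right
    rw [isOpen_induced_iff] at hV
    obtain ⟨U, hU, hUV⟩ := hV
    have hxU : x ∈ U := by
      have : (⟨x, hx⟩ : Set.range y) ∈ Subtype.val ⁻¹' U := hUV ▸ hxV
      exact this
    obtain ⟨t, htB, hxt, htU⟩ := hB.exists_subset_of_mem_open hxU hU
    obtain ⟨m, rfl⟩ : ∃ m, b m = t := by
      rw [hb] at htB; exact htB
    have hsub : Vᶜ ⊆ (fun n => (⟨y n, Set.mem_range_self n⟩ : Set.range y)) '' Set.Iio m := by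
      rintro ⟨z, hz⟩ hzV
      obtain ⟨n, rfl⟩ := hz
      refine ⟨n, ?_, rfl⟩
      simp only [Set.mem_Iio]
      by_contra hge
      push_neg at hge
      have : y n ∈ U := htU (hWsub m n hge (hy_spec n).1)
      exact hzV (hUV ▸ this)
    exact Set.Finite.subset ((Set.finite_Iio m).image _) hsub
  · rintro (rfl | hfin)
    · exact isOpen_empty
    · have := hfin.isClosed.isOpen_compl
      rwa [compl_compl] at this
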